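/- Each virtual root function ρ_{d,j}, viewed as a function from ℝ^d (the space of monic degree-d polynomials, parametrized by coefficients) to ℝ, is continuous. -/

import Mathlib

open Polynomial Set

noncomputable def monicPoly (d : ℕ) (c : Fin d → ℝ) : Polynomial ℝ :=
  X ^ d + ∑ i : Fin d, C (c i) * X ^ (i : ℕ)

noncomputable def dCoeff {d : ℕ} (c : Fin (d + 1) → ℝ) : Fin d → ℝ :=
  fun i => c i.succ * ((i : ℕ) + 1) / (d + 1)

noncomputable def bnd {d : ℕ} (c : Fin d → ℝ) : ℝ := 1 + ⨆ i, |c i|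

/-- The point of `[a,b]` where `|P|` attains its minimum. -/
noncomputable def Rmin (a b : ℝ) (P : Polynomial ℝ) : ℝ :=
  if h : a ≤ b then
    (isCompact_Icc.exists_isMinOn (Set.nonempty_Icc.mpr h)
      ((continuous_abs.comp P.continuous).continuousOn)).choose
  else a

/-- The `j`-th virtual root of the monic polynomial with coefficient vector `c`,
defined inductively as the minimizer of `|P|` between consecutive virtual roots
of `P/d`, infinite endpoints being handled by the Cauchy root bound `bnd`. -/
noncomputable def vroot : (d : ℕ) → ℤ → (Fin d → ℝ) → ℝ
  | 0, _, _ => 0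
  | d + 1, j, c =>
    Rmin (if 1 < j then vroot d (j - 1) (dCoeff c) else -(bnd c))
      (if j < (d : ℤ) + 1 then vroot d j (dCoeff c) else bnd c)
      (monicPoly (d + 1) c)

open Filter Topology
section VRootAux

lemma eval_monicPoly (d : ℕ) (c : Fin d → ℝ) (x : ℝ) :
    (monicPoly d c).eval x = x ^ d + ∑ i : Fin d, c i * x ^ (i : ℕ) := by
  simp [monicPoly, eval_finset_sum]

lemma coeff_monicPoly (d : ℕ) (c : Fin d → ℝ) : (monicPoly d c).coeff d = 1 := by
  rw [monicPoly, coeff_add, coeff_X_pow, if_pos rfl, finset_sum_coeff,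
    Finset.sum_eq_zero, add_zero]
  intro i _
  rw [coeff_C_mul, coeff_X_pow, if_neg (by exact_mod_cast i.is_lt.ne'), mul_zero]

lemma monicPoly_nonconst {d : ℕ} (hd : 0 < d) (c : Fin d → ℝ) {x y : ℝ} (hxy : x < y)
    (h : ∀ z ∈ Icc x y, (monicPoly d c).eval z = (monicPoly d c).eval x) : False := by
  have h0 : monicPoly d c - C ((monicPoly d c).eval x) = 0 := by
    apply eq_zero_of_infinite_isRoot
    apply (Set.Icc_infinite hxy).mono
    intro z hz
    simp [IsRoot, h z hz]
  have h1 := congrArg (fun p => Polynomial.coeff p d) h0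
  simp [coeff_monicPoly, Polynomial.coeff_C, hd.ne'] at h1

lemma one_le_bnd {d : ℕ} (c : Fin d → ℝ) : 1 ≤ bnd c := by
  have : (0:ℝ) ≤ ⨆ i, |c i| := Real.iSup_nonneg fun i => abs_nonneg _
  simp [bnd]; linarith

lemma abs_le_bnd {d : ℕ} (c : Fin d → ℝ) (i : Fin d) : |c i| ≤ bnd c - 1 := by
  simpa [bnd] using le_ciSup (f := fun i => |c i|) (Set.Finite.bddAbove (Set.finite_range _)) i

lemma bnd_dCoeff_le {d : ℕ} (c : Fin (d + 1) → ℝ) : bnd (dCoeff c) ≤ bnd c := by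
  have h : ∀ i : Fin d, |dCoeff c i| ≤ bnd c - 1 := by
    intro i
    have h1 : |dCoeff c i| ≤ |c i.succ| := by
      rw [dCoeff, abs_div, abs_mul]
      rw [abs_of_nonneg (by positivity : (0:ℝ) ≤ (i:ℕ) + 1),
        abs_of_nonneg (by positivity : (0:ℝ) ≤ (d:ℕ) + 1)]
      rw [div_le_iff₀ (by positivity)]
      have hi : ((i:ℕ) : ℝ) < d := by exact_mod_cast i.is_lt
      have : ((i:ℕ) : ℝ) + 1 ≤ (d:ℝ) + 1 := by linarith
      nlinarith [abs_nonneg (c i.succ)]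
    exact h1.trans (abs_le_bnd c i.succ)
  have h2 : (⨆ i : Fin d, |dCoeff c i|) ≤ bnd c - 1 :=
    Real.iSup_le h (by linarith [one_le_bnd c])
  simp only [bnd] at *
  linarith

lemma abs_sum_le {d : ℕ} (c : Fin d → ℝ) {x : ℝ} (hx : bnd c ≤ |x|) :
    |∑ i : Fin d, c i * x ^ (i : ℕ)| ≤ |x| ^ d - 1 := by
  have hM : (0:ℝ) ≤ bnd c - 1 := by linarith [one_le_bnd c]
  have hx1 : (1:ℝ) ≤ |x| := le_trans (one_le_bnd c) hx
  have hS : (0:ℝ) ≤ ∑ i ∈ Finset.range d, |x| ^ i :=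
    Finset.sum_nonneg fun i _ => by positivity
  calc |∑ i : Fin d, c i * x ^ (i : ℕ)|
      ≤ ∑ i : Fin d, |c i * x ^ (i : ℕ)| := Finset.abs_sum_le_sum_abs _ _
    _ ≤ ∑ i : Fin d, (bnd c - 1) * |x| ^ (i : ℕ) := by
        apply Finset.sum_le_sum
        intro i _
        rw [abs_mul, abs_pow]
        exact mul_le_mul_of_nonneg_right (abs_le_bnd c i) (by positivity)
    _ = (bnd c - 1) * ∑ i ∈ Finset.range d, |x| ^ i := by
        rw [Finset.mul_sum, ← Fin.sum_univ_eq_sum_range]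
    _ ≤ (|x| - 1) * ∑ i ∈ Finset.range d, |x| ^ i := by
        apply mul_le_mul_of_nonneg_right _ hS
        linarith
    _ = |x| ^ d - 1 := by rw [mul_comm, geom_sum_mul]

lemma cauchy_pos {d : ℕ} (c : Fin d → ℝ) {x : ℝ} (hx : bnd c ≤ x) :
    0 < (monicPoly d c).eval x := by
  have hx0 : 0 < x := lt_of_lt_of_le (by linarith [one_le_bnd c]) hx
  have habs : |x| = x := abs_of_pos hx0
  have h := abs_sum_le c (x := x) (by rwa [habs])
  rw [habs] at h
  rw [eval_monicPoly]
  have := abs_le.mp h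
  linarith [this.1]

lemma cauchy_neg {d : ℕ} (c : Fin d → ℝ) {x : ℝ} (hx : x ≤ -(bnd c)) :
    0 < (-1 : ℝ) ^ d * (monicPoly d c).eval x := by
  have hx0 : x < 0 := lt_of_le_of_lt hx (by linarith [one_le_bnd c])
  have habs : |x| = -x := abs_of_neg hx0
  have h := abs_sum_le c (x := x) (by rw [habs]; linarith)
  rw [eval_monicPoly, mul_add]
  have hpow : (-1 : ℝ) ^ d * x ^ d = |x| ^ d := by
    rw [habs, neg_pow]; ring
  have h2 := abs_le.mp h
  have h3 : (-1 : ℝ) ^ d * ∑ i : Fin d, c i * x ^ (i : ℕ) ≥ -(|x| ^ d - 1) := by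
    rcases neg_one_pow_eq_or ℝ d with he | he <;> rw [he] <;> nlinarith [h2.1, h2.2]
  nlinarith [h3, hpow]

lemma Rmin_spec {a b : ℝ} (h : a ≤ b) (P : Polynomial ℝ) :
    Rmin a b P ∈ Icc a b ∧ ∀ y ∈ Icc a b, |P.eval (Rmin a b P)| ≤ |P.eval y| := by
  rw [Rmin, dif_pos h]
  obtain ⟨h1, h2⟩ := (isCompact_Icc.exists_isMinOn (Set.nonempty_Icc.mpr h)
      ((continuous_abs.comp P.continuous).continuousOn)).choose_spec
  exact ⟨h1, fun y hy => h2 hy⟩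

lemma hasDerivAt_monicPoly (d : ℕ) (c : Fin (d + 1) → ℝ) (x : ℝ) :
    HasDerivAt (fun y => (monicPoly (d + 1) c).eval y)
      (((d : ℝ) + 1) * (monicPoly d (dCoeff c)).eval x) x := by
  have h : HasDerivAt (fun y : ℝ => y ^ (d + 1) + ∑ i : Fin (d + 1), c i * y ^ (i : ℕ))
      ((↑(d + 1) : ℝ) * x ^ d + ∑ i : Fin (d + 1), c i * ((i : ℕ) * x ^ ((i : ℕ) - 1))) x := by
    have h1 := hasDerivAt_pow (d + 1) x
    simp only [Nat.add_sub_cancel] at h1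
    exact h1.add (HasDerivAt.fun_sum fun i _ => (hasDerivAt_pow (i : ℕ) x).const_mul (c i))
  have he : (fun y : ℝ => y ^ (d + 1) + ∑ i : Fin (d + 1), c i * y ^ (i : ℕ))
      = fun y => (monicPoly (d + 1) c).eval y := by
    funext y; rw [eval_monicPoly]
  rw [he] at h
  convert h using 1
  rw [eval_monicPoly, Fin.sum_univ_succ, mul_add, Finset.mul_sum]
  simp only [Fin.val_zero, Fin.val_succ, Nat.cast_zero, pow_zero, Nat.add_sub_cancel,
    zero_mul, mul_zero, zero_add]
  congr 1
  · push_cast; ring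
  · refine Finset.sum_congr rfl fun i _ => ?_
    rw [dCoeff]
    push_cast
    field_simp

lemma bnd_continuous (d : ℕ) : Continuous fun c : Fin d → ℝ => bnd c := by
  unfold bnd
  apply continuous_const.add
  rcases isEmpty_or_nonempty (Fin d) with h | h
  · simpa [Real.iSup_of_isEmpty] using continuous_const
  · have he : (fun c : Fin d → ℝ => ⨆ i, |c i|)
        = fun c => Finset.univ.sup' Finset.univ_nonempty fun i => |c i| := by
      funext c; rw [Finset.sup'_univ_eq_ciSup]
    rw [he]
    rw [continuous_iff_continuousAt]
    intro c
    exact Filter.Tendsto.finset_sup'_nhds_apply Finset.univ_nonempty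
      fun i _ => ((continuous_apply i).abs.tendsto c)

lemma injOn_monicPoly {d : ℕ} (hd : 0 < d) (c : Fin d → ℝ) {a b : ℝ}
    (hmono : MonotoneOn (fun x => (monicPoly d c).eval x) (Icc a b) ∨
      AntitoneOn (fun x => (monicPoly d c).eval x) (Icc a b)) :
    InjOn (fun x => (monicPoly d c).eval x) (Icc a b) := by
  have key : ∀ u v : ℝ, u ∈ Icc a b → v ∈ Icc a b → u < v →
      (monicPoly d c).eval u = (monicPoly d c).eval v → False := by
    intro u v hu hv huv heq
    apply monicPoly_nonconst hd c huv
    intro z hz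
    have hz' : z ∈ Icc a b := ⟨le_trans hu.1 hz.1, le_trans hz.2 hv.2⟩
    rcases hmono with hm | hm
    · exact le_antisymm (heq ▸ hm hz' hv hz.2) (hm hu hz' hz.1)
    · exact le_antisymm (hm hu hz' hz.1) (heq ▸ hm hz' hv hz.2)
  intro u hu v hv heq
  rcases lt_trichotomy u v with h | h | h
  · exact absurd (key u v hu hv h heq) (by simp)
  · exact h
  · exact absurd (key v u hv hu h heq.symm) (by simp)

lemma minOn_unique {d : ℕ} (hd : 0 < d) (c : Fin d → ℝ) {a b : ℝ}
    (hmono : MonotoneOn (fun x => (monicPoly d c).eval x) (Icc a b) ∨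
      AntitoneOn (fun x => (monicPoly d c).eval x) (Icc a b))
    {u v : ℝ} (hu : u ∈ Icc a b) (hv : v ∈ Icc a b)
    (hmu : ∀ y ∈ Icc a b, |(monicPoly d c).eval u| ≤ |(monicPoly d c).eval y|)
    (hmv : ∀ y ∈ Icc a b, |(monicPoly d c).eval v| ≤ |(monicPoly d c).eval y|) :
    u = v := by
  have hinj := injOn_monicPoly hd c hmono
  set f : ℝ → ℝ := fun x => (monicPoly d c).eval x with hf
  have h1 : |f u| = |f v| := le_antisymm (hmu v hv) (hmv u hu)
  rcases abs_eq_abs.mp h1 with h | h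
  · exact hinj hu hv h
  · by_cases hz : f u = 0
    · exact hinj hu hv (by rw [hz] at h ⊢; linarith)
    · have h0 : (0 : ℝ) ∈ uIcc (f u) (f v) := by
        rcases lt_or_gt_of_ne hz with hneg | hpos
        · have : 0 < f v := by rw [h] at hneg; linarith
          exact Set.mem_uIcc.mpr (Or.inl ⟨hneg.le, this.le⟩)
        · have : f v < 0 := by rw [h] at hpos; linarith
          exact Set.mem_uIcc.mpr (Or.inr ⟨this.le, hpos.le⟩)
      obtain ⟨z, hzI, hz0⟩ := intermediate_value_uIcc
        ((monicPoly d c).continuous.continuousOn (s := uIcc u v)) h0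
      have hzab : z ∈ Icc a b := uIcc_subset_Icc hu hv hzI
      have h2 := hmu z hzab
      have hz0' : (monicPoly d c).eval z = 0 := hz0
      rw [hz0', abs_zero] at h2
      exact absurd (abs_eq_zero.mp (le_antisymm h2 (abs_nonneg _))) hz

lemma sign_right {d : ℕ} (hd : 0 < d) (c : Fin d → ℝ) {a b ε : ℝ}
    (hmono : MonotoneOn (fun y => ε * (monicPoly d c).eval y) (Icc a b))
    (hε : ε = 1 ∨ ε = -1)
    {m : ℝ} (hm : m ∈ Icc a b)
    (hmin : ∀ y ∈ Icc a b, |(monicPoly d c).eval m| ≤ |(monicPoly d c).eval y|)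
    {x : ℝ} (hx : x ∈ Icc a b) (hmx : m < x) :
    0 ≤ ε * (monicPoly d c).eval x := by
  by_contra hneg
  push_neg at hneg
  set f : ℝ → ℝ := fun y => (monicPoly d c).eval y with hf
  have habs : ∀ z : ℝ, ε * f z < 0 → |f z| = -(ε * f z) := by
    intro z hz
    rcases hε with he | he <;> rw [he] at hz ⊢
    · rw [one_mul] at hz ⊢; exact abs_of_neg hz
    · have : 0 < f z := by nlinarith
      rw [abs_of_pos this]; ring
  have hfm : ε * f m ≤ ε * f x := hmono hm hx hmx.le
  have hfm0 : ε * f m < 0 := lt_of_le_of_lt hfm hneg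
  have h1 : |f m| ≤ |f x| := hmin x hx
  rw [habs m hfm0, habs x hneg] at h1
  have heq : ε * f m = ε * f x := le_antisymm hfm (by linarith)
  apply monicPoly_nonconst hd c hmx
  intro z hz
  have hzI : z ∈ Icc a b := ⟨le_trans hm.1 hz.1, le_trans hz.2 hx.2⟩
  have l1 : ε * f m ≤ ε * f z := hmono hm hzI hz.1
  have l2 : ε * f z ≤ ε * f x := hmono hzI hx hz.2
  have : ε * f z = ε * f m := by linarith
  rcases hε with he | he <;> rw [he] at this <;> [skip; skip] <;> nlinarith [this]

lemma sign_left {d : ℕ} (hd : 0 < d) (c : Fin d → ℝ) {a b ε : ℝ}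
    (hmono : MonotoneOn (fun y => -ε * (monicPoly d c).eval y) (Icc a b))
    (hε : ε = 1 ∨ ε = -1)
    {m : ℝ} (hm : m ∈ Icc a b)
    (hmin : ∀ y ∈ Icc a b, |(monicPoly d c).eval m| ≤ |(monicPoly d c).eval y|)
    {x : ℝ} (hx : x ∈ Icc a b) (hmx : x < m) :
    0 ≤ ε * (monicPoly d c).eval x := by
  by_contra hneg
  push_neg at hneg
  set f : ℝ → ℝ := fun y => (monicPoly d c).eval y with hf
  have habs : ∀ z : ℝ, ε * f z < 0 → |f z| = -(ε * f z) := by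
    intro z hz
    rcases hε with he | he <;> rw [he] at hz ⊢
    · rw [one_mul] at hz ⊢; exact abs_of_neg hz
    · have : 0 < f z := by nlinarith
      rw [abs_of_pos this]; ring
  have hfm : -ε * f x ≤ -ε * f m := hmono hx hm hmx.le
  have hfm0 : ε * f m < 0 := by nlinarith
  have h1 : |f m| ≤ |f x| := hmin x hx
  rw [habs m hfm0, habs x hneg] at h1
  have heq : ε * f m = ε * f x := by nlinarith
  apply monicPoly_nonconst hd c hmx
  intro z hz
  have hzI : z ∈ Icc a b := ⟨le_trans hx.1 hz.1, le_trans hz.2 hm.2⟩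
  have l1 : -ε * f x ≤ -ε * f z := hmono hx hzI hz.1
  have l2 : -ε * f z ≤ -ε * f m := hmono hzI hm hz.2
  have : ε * f z = ε * f x := by nlinarith
  rcases hε with he | he <;> rw [he] at this <;> nlinarith [this]

lemma continuous_argmin {n : ℕ} {a b g : (Fin n → ℝ) → ℝ}
    {F : (Fin n → ℝ) → ℝ → ℝ}
    (hF : Continuous fun p : (Fin n → ℝ) × ℝ => F p.1 p.2)
    (ha : Continuous a) (hb : Continuous b) (hab : ∀ c, a c ≤ b c)
    (hg : ∀ c, g c ∈ Icc (a c) (b c))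
    (hmin : ∀ c, ∀ y ∈ Icc (a c) (b c), F c (g c) ≤ F c y)
    (huniq : ∀ c u v, u ∈ Icc (a c) (b c) → v ∈ Icc (a c) (b c) →
      (∀ y ∈ Icc (a c) (b c), F c u ≤ F c y) →
      (∀ y ∈ Icc (a c) (b c), F c v ≤ F c y) → u = v) :
    Continuous g := by
  rw [continuous_iff_continuousAt]
  intro c0
  rw [ContinuousAt]
  apply Filter.tendsto_of_subseq_tendsto
  intro ns hns
  have hyK : ∀ k, max (a c0 - 1) (min (g (ns k)) (b c0 + 1)) ∈ Icc (a c0 - 1) (b c0 + 1) := by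
    intro k
    constructor
    · exact le_max_left _ _
    · apply max_le (by linarith [hab c0]) (min_le_right _ _)
  obtain ⟨L, hLK, φ, hφ, hLt⟩ := isCompact_Icc.tendsto_subseq hyK
  refine ⟨φ, ?_⟩
  have hae : Tendsto (fun k => a (ns k)) atTop (𝓝 (a c0)) := (ha.tendsto c0).comp hns
  have hbe : Tendsto (fun k => b (ns k)) atTop (𝓝 (b c0)) := (hb.tendsto c0).comp hns
  have hev : ∀ᶠ k in atTop, max (a c0 - 1) (min (g (ns k)) (b c0 + 1)) = g (ns k) := by
    filter_upwards [hae.eventually_const_lt (by linarith : a c0 - 1 < a c0),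
      hbe.eventually_lt_const (by linarith : b c0 < b c0 + 1)] with k h1 h2
    rw [min_eq_left (le_trans (hg (ns k)).2 h2.le),
      max_eq_right (le_trans h1.le (hg (ns k)).1)]
  have hgt : Tendsto (fun k => g (ns (φ k))) atTop (𝓝 L) :=
    hLt.congr' (hφ.tendsto_atTop.eventually hev)
  suffices hL : L = g c0 by rwa [hL] at hgt
  have hnsφ : Tendsto (fun k => ns (φ k)) atTop (𝓝 c0) := hns.comp hφ.tendsto_atTop
  have haφ : Tendsto (fun k => a (ns (φ k))) atTop (𝓝 (a c0)) := (ha.tendsto c0).comp hnsφ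
  have hbφ : Tendsto (fun k => b (ns (φ k))) atTop (𝓝 (b c0)) := (hb.tendsto c0).comp hnsφ
  have hLmem : L ∈ Icc (a c0) (b c0) :=
    ⟨le_of_tendsto_of_tendsto' haφ hgt fun k => (hg _).1,
     le_of_tendsto_of_tendsto' hgt hbφ fun k => (hg _).2⟩
  have hFt : Tendsto (fun k => F (ns (φ k)) (g (ns (φ k)))) atTop (𝓝 (F c0 L)) :=
    (hF.tendsto (c0, L)).comp (hnsφ.prodMk_nhds hgt)
  refine huniq c0 L (g c0) hLmem (hg c0) ?_ (hmin c0)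
  intro z hz
  have hwmem : ∀ k, max (a (ns (φ k))) (min z (b (ns (φ k)))) ∈
      Icc (a (ns (φ k))) (b (ns (φ k))) := by
    intro k
    exact ⟨le_max_left _ _, max_le (hab _) (min_le_right _ _)⟩
  have hwt : Tendsto (fun k => max (a (ns (φ k))) (min z (b (ns (φ k))))) atTop (𝓝 z) := by
    have h := haφ.max ((tendsto_const_nhds (x := z)).min hbφ)
    rwa [min_eq_left hz.2, max_eq_right hz.1] at h
  have hFw : Tendsto (fun k => F (ns (φ k)) (max (a (ns (φ k))) (min z (b (ns (φ k))))))
      atTop (𝓝 (F c0 z)) := (hF.tendsto (c0, z)).comp (hnsφ.prodMk_nhds hwt)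
  exact le_of_tendsto_of_tendsto' hFt hFw fun k => hmin _ _ (hwmem k)

theorem vroot_main (d : ℕ) :
    (∀ (c : Fin d → ℝ) (j : ℤ), 1 ≤ j → j ≤ (d : ℤ) →
      vroot d j c ∈ Icc (-(bnd c)) (bnd c)) ∧
    (∀ (c : Fin d → ℝ) (j : ℤ), 1 ≤ j → j + 1 ≤ (d : ℤ) →
      vroot d j c ≤ vroot d (j + 1) c) ∧
    (∀ (c : Fin d → ℝ) (j : ℤ), 0 ≤ j → j ≤ (d : ℤ) → ∀ x : ℝ,
      (1 ≤ j → vroot d j c < x) → (j + 1 ≤ (d : ℤ) → x < vroot d (j + 1) c) →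
      0 ≤ (-1 : ℝ) ^ ((d : ℤ) - j).toNat * (monicPoly d c).eval x) ∧
    (∀ j : ℤ, 1 ≤ j → j ≤ (d : ℤ) → Continuous fun c : Fin d → ℝ => vroot d j c) := by
  induction d with
  | zero =>
    refine ⟨fun c j h1 h2 => absurd (h1.trans h2) (by norm_num),
            fun c j h1 h2 => by omega,
            fun c j h0 hd x hg1 hg2 => ?_,
            fun j h1 h2 => absurd (h1.trans h2) (by norm_num)⟩
    have hj : j = 0 := le_antisymm (by exact_mod_cast hd) h0
    subst hj
    simp [eval_monicPoly]
  | succ d ih =>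
    obtain ⟨ih1, ih2, ih3, ih4⟩ := ih
    set P : (Fin (d + 1) → ℝ) → Polynomial ℝ := fun c => monicPoly (d + 1) c with hP
    set A : (Fin (d + 1) → ℝ) → ℤ → ℝ :=
      fun c j => if 1 < j then vroot d (j - 1) (dCoeff c) else -(bnd c) with hA
    set B : (Fin (d + 1) → ℝ) → ℤ → ℝ :=
      fun c j => if j < (d : ℤ) + 1 then vroot d j (dCoeff c) else bnd c with hB
    have hunfold : ∀ (c : Fin (d + 1) → ℝ) (j : ℤ),
        vroot (d + 1) j c = Rmin (A c j) (B c j) (P c) := fun c j => rfl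
    have hAle : ∀ (c : Fin (d + 1) → ℝ) (j : ℤ), 1 ≤ j → j ≤ (d : ℤ) + 1 →
        -(bnd c) ≤ A c j := by
      intro c j h1 h2
      by_cases h : 1 < j
      · simp only [hA, if_pos h]
        have h3 := (ih1 (dCoeff c) (j - 1) (by omega) (by omega)).1
        have h4 := bnd_dCoeff_le c
        linarith
      · simp [hA, h]
    have hBge : ∀ (c : Fin (d + 1) → ℝ) (j : ℤ), 1 ≤ j → j ≤ (d : ℤ) + 1 →
        B c j ≤ bnd c := by
      intro c j h1 h2
      by_cases h : j < (d : ℤ) + 1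
      · simp only [hB, if_pos h]
        have h3 := (ih1 (dCoeff c) j (by omega) (by omega)).2
        have h4 := bnd_dCoeff_le c
        linarith
      · simp only [hB, if_neg h, le_refl]
    have hAB : ∀ (c : Fin (d + 1) → ℝ) (j : ℤ), 1 ≤ j → j ≤ (d : ℤ) + 1 →
        A c j ≤ B c j := by
      intro c j h1 h2
      by_cases hj1 : 1 < j <;> by_cases hj2 : j < (d : ℤ) + 1
      · simp only [hA, hB, if_pos hj1, if_pos hj2]
        have h3 := ih2 (dCoeff c) (j - 1) (by omega) (by omega)
        simpa [sub_add_cancel] using h3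
      · simp only [hA, hB, if_pos hj1, if_neg hj2]
        have h3 := (ih1 (dCoeff c) (j - 1) (by omega) (by omega)).2
        linarith [bnd_dCoeff_le c]
      · simp only [hA, hB, if_neg hj1, if_pos hj2]
        have h3 := (ih1 (dCoeff c) j (by omega) (by omega)).1
        linarith [bnd_dCoeff_le c]
      · simp only [hA, hB, if_neg hj1, if_neg hj2]
        linarith [one_le_bnd c]
    have hmem : ∀ (c : Fin (d + 1) → ℝ) (j : ℤ), 1 ≤ j → j ≤ (d : ℤ) + 1 →
        vroot (d + 1) j c ∈ Icc (A c j) (B c j) := by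
      intro c j h1 h2
      rw [hunfold]
      exact (Rmin_spec (hAB c j h1 h2) (P c)).1
    have hminP : ∀ (c : Fin (d + 1) → ℝ) (j : ℤ), 1 ≤ j → j ≤ (d : ℤ) + 1 →
        ∀ y ∈ Icc (A c j) (B c j),
          |(P c).eval (vroot (d + 1) j c)| ≤ |(P c).eval y| := by
      intro c j h1 h2
      rw [hunfold]
      exact (Rmin_spec (hAB c j h1 h2) (P c)).2
    have hmono : ∀ (c : Fin (d + 1) → ℝ) (j : ℤ), 1 ≤ j → j ≤ (d : ℤ) + 1 →
        MonotoneOn (fun x => (-1 : ℝ) ^ ((d : ℤ) + 1 - j).toNat * (P c).eval x)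
          (Icc (A c j) (B c j)) := by
      intro c j h1 h2
      set ε := (-1 : ℝ) ^ ((d : ℤ) + 1 - j).toNat with hε
      apply monotoneOn_of_deriv_nonneg (convex_Icc _ _)
      · exact (continuous_const.mul (P c).continuous).continuousOn
      · intro x hx
        exact ((hasDerivAt_monicPoly d c x).const_mul ε).differentiableAt.differentiableWithinAt
      · intro x hx
        rw [interior_Icc, mem_Ioo] at hx
        have hder : deriv (fun y => ε * (P c).eval y) x
            = ε * (((d : ℝ) + 1) * (monicPoly d (dCoeff c)).eval x) :=
          ((hasDerivAt_monicPoly d c x).const_mul ε).deriv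
        rw [hder]
        have hsign := ih3 (dCoeff c) (j - 1) (by omega) (by omega) x
          (fun h => by
            have he : A c j = vroot d (j - 1) (dCoeff c) := if_pos (by omega)
            rw [← he]; exact hx.1)
          (fun h => by
            have he : B c j = vroot d (j - 1 + 1) (dCoeff c) := by
              simp only [hB]; rw [if_pos (by omega : j < (d:ℤ) + 1)]; ring_nf
            rw [← he]; exact hx.2)
        have hexp : ((d : ℤ) - (j - 1)).toNat = ((d : ℤ) + 1 - j).toNat := by omega
        rw [hexp] at hsign
        have hd1 : (0 : ℝ) ≤ (d : ℝ) + 1 := by positivity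
        nlinarith [hsign]
    have hmonoOr : ∀ (c : Fin (d + 1) → ℝ) (j : ℤ), 1 ≤ j → j ≤ (d : ℤ) + 1 →
        MonotoneOn (fun x => (P c).eval x) (Icc (A c j) (B c j)) ∨
        AntitoneOn (fun x => (P c).eval x) (Icc (A c j) (B c j)) := by
      intro c j h1 h2
      have h := hmono c j h1 h2
      rcases neg_one_pow_eq_or ℝ ((d : ℤ) + 1 - j).toNat with he | he <;> rw [he] at h
      · left; intro u hu v hv huv; have := h hu hv huv; simpa using this
      · right; intro u hu v hv huv; have := h hu hv huv; simp only at this; nlinarith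
    -- goal 1
    refine ⟨?_, ?_, ?_, ?_⟩
    · intro c j h1 h2
      push_cast at h2
      have hm := hmem c j h1 (by omega)
      exact ⟨le_trans (hAle c j h1 (by omega)) hm.1, le_trans hm.2 (hBge c j h1 (by omega))⟩
    -- goal 2
    · intro c j h1 h2
      push_cast at h2
      have e1 : B c j = vroot d j (dCoeff c) := if_pos (by omega)
      have e2 : A c (j + 1) = vroot d j (dCoeff c) := by
        simp only [hA]; rw [if_pos (by omega : (1:ℤ) < j + 1)]; ring_nf
      have m1 := (hmem c j h1 (by omega)).2
      have m2 := (hmem c (j + 1) (by omega) (by omega)).1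
      rw [e1] at m1; rw [e2] at m2
      linarith
    -- goal 3
    · intro c j h0 hdj x hg1 hg2
      push_cast at hdj hg2 ⊢
      set ε := (-1 : ℝ) ^ ((d : ℤ) + 1 - j).toNat with hε
      have hεor := neg_one_pow_eq_or ℝ ((d : ℤ) + 1 - j).toNat
      by_cases hj1 : 1 ≤ j
      · by_cases hjd : j ≤ (d : ℤ)
        · -- middle case
          have hx1 : vroot (d + 1) j c < x := hg1 hj1
          have hx2 : x < vroot (d + 1) (j + 1) c := hg2 (by omega)
          by_cases hxB : x ≤ B c j
          · exact sign_right (Nat.succ_pos d) c (hmono c j hj1 (by omega)) hεor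
              (hmem c j hj1 (by omega)) (hminP c j hj1 (by omega))
              ⟨le_trans (hmem c j hj1 (by omega)).1 hx1.le, hxB⟩ hx1
          · push_neg at hxB
            have eAB : A c (j + 1) = B c j := by
              simp only [hA, hB]
              rw [if_pos (by omega : (1:ℤ) < j + 1), if_pos (by omega : j < (d:ℤ) + 1)]
              ring_nf
            have hexp : ((d : ℤ) + 1 - j).toNat = ((d : ℤ) + 1 - (j + 1)).toNat + 1 := by omega
            have hnegε : -ε = (-1 : ℝ) ^ ((d : ℤ) + 1 - (j + 1)).toNat := by
              rw [hε, hexp, pow_succ]; ring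
            have hm := hmono c (j + 1) (by omega) (by omega)
            rw [← hnegε] at hm
            exact sign_left (Nat.succ_pos d) c hm hεor
              (hmem c (j + 1) (by omega) (by omega)) (hminP c (j + 1) (by omega) (by omega))
              ⟨by rw [eAB]; exact hxB.le, le_trans hx2.le (hmem c (j + 1) (by omega) (by omega)).2⟩
              hx2
        · -- j = d + 1
          have hj : j = (d : ℤ) + 1 := by omega
          have hx1 : vroot (d + 1) j c < x := hg1 hj1
          have hε1 : ε = 1 := by rw [hε, show ((d : ℤ) + 1 - j).toNat = 0 by omega, pow_zero]
          by_cases hxB : x ≤ B c j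
          · exact sign_right (Nat.succ_pos d) c (hmono c j hj1 (by omega)) hεor
              (hmem c j hj1 (by omega)) (hminP c j hj1 (by omega))
              ⟨le_trans (hmem c j hj1 (by omega)).1 hx1.le, hxB⟩ hx1
          · push_neg at hxB
            have eB : B c j = bnd c := if_neg (by omega)
            rw [eB] at hxB
            rw [hε1, one_mul]
            exact (cauchy_pos c hxB.le).le
      · -- j = 0
        have hj : j = 0 := by omega
        subst hj
        have hx2 : x < vroot (d + 1) (0 + 1) c := hg2 (by omega)
        by_cases hxA : A c 1 ≤ x
        · have hexp : ((d : ℤ) + 1 - 0).toNat = ((d : ℤ) + 1 - 1).toNat + 1 := by omega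
          have hnegε : -ε = (-1 : ℝ) ^ ((d : ℤ) + 1 - 1).toNat := by
            rw [hε, hexp, pow_succ]; ring
          have hm := hmono c 1 le_rfl (by omega)
          rw [← hnegε] at hm
          exact sign_left (Nat.succ_pos d) c hm hεor
            (hmem c 1 le_rfl (by omega)) (hminP c 1 le_rfl (by omega))
            ⟨hxA, le_trans hx2.le (hmem c 1 le_rfl (by omega)).2⟩ (by exact_mod_cast hx2)
        · push_neg at hxA
          have eA : A c 1 = -(bnd c) := if_neg (by omega)
          rw [eA] at hxA
          have hc := cauchy_neg c (x := x) hxA.le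
          have hε2 : ε = (-1 : ℝ) ^ (d + 1) := by
            have ht : ((d : ℤ) + 1 - 0).toNat = d + 1 := by omega
            rw [hε, ht]
          rw [hε2]
          exact hc.le
    -- goal 4
    · intro j h1 h2
      push_cast at h2
      have hcd : Continuous fun c : Fin (d + 1) → ℝ => dCoeff c :=
        continuous_pi fun i => ((continuous_apply i.succ).mul continuous_const).div_const _
      have hFc : Continuous fun p : (Fin (d + 1) → ℝ) × ℝ => |(P p.1).eval p.2| := by
        apply Continuous.abs
        have he : (fun p : (Fin (d + 1) → ℝ) × ℝ => (P p.1).eval p.2)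
            = fun p : (Fin (d + 1) → ℝ) × ℝ =>
              p.2 ^ (d + 1) + ∑ i : Fin (d + 1), p.1 i * p.2 ^ (i : ℕ) := by
          funext p; rw [hP]; exact eval_monicPoly (d + 1) p.1 p.2
        rw [he]
        exact (continuous_snd.pow _).add (continuous_finset_sum _ fun i _ =>
          ((continuous_apply i).comp continuous_fst).mul (continuous_snd.pow _))
      have hcA : Continuous fun c => A c j := by
        by_cases h : 1 < j
        · have : (fun c : Fin (d + 1) → ℝ => A c j)
              = fun c => vroot d (j - 1) (dCoeff c) := by
            funext c; exact if_pos h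
          rw [this]
          exact (ih4 (j - 1) (by omega) (by omega)).comp hcd
        · have : (fun c : Fin (d + 1) → ℝ => A c j) = fun c => -(bnd c) := by
            funext c; exact if_neg h
          rw [this]
          exact (bnd_continuous (d + 1)).neg
      have hcB : Continuous fun c => B c j := by
        by_cases h : j < (d : ℤ) + 1
        · have : (fun c : Fin (d + 1) → ℝ => B c j)
              = fun c => vroot d j (dCoeff c) := by
            funext c; exact if_pos h
          rw [this]
          exact (ih4 j h1 (by omega)).comp hcd
        · have : (fun c : Fin (d + 1) → ℝ => B c j) = fun c => bnd c := by
            funext c; exact if_neg h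
          rw [this]
          exact bnd_continuous (d + 1)
      exact continuous_argmin (F := fun c x => |(P c).eval x|) hFc hcA hcB
        (fun c => hAB c j h1 (by omega))
        (fun c => hmem c j h1 (by omega))
        (fun c => hminP c j h1 (by omega))
        (fun c u v hu hv hmu hmv =>
          minOn_unique (Nat.succ_pos d) c (hmonoOr c j h1 (by omega)) hu hv hmu hmv)


end VRootAux

/-- each virtual root function `ρ_{d,j}` is continuous on the
space `ℝ^d` of monic degree-`d` polynomials. -/
theorem vroot_continuous (d j : ℕ) (hj1 : 1 ≤ j) (hjd : j ≤ d) :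
    Continuous fun c : Fin d → ℝ => vroot d (j : ℤ) c :=
  (vroot_main d).2.2.2 (j : ℤ) (by exact_mod_cast hj1) (by exact_mod_cast hjd)
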